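/- Let A = A₁ × ⋯ × A_N be a finite product of finite sets, and fix s. Let μ = (μ₁,…,μ_N) be a joint product policy with μ_i(a_i) > 0 for all i, a_i. Let A_f : A → ℝ satisfy E_{a∼μ}[A_f(a)] = 0 conditional on any fixed actions of the first h−1 agents in the sense of the multi-agent advantage construction. For an ordered subset (i₁,…,i_h), a product distribution μ'_{i_{1:h−1}} over A_{i_1}×⋯×A_{i_{h−1}}, and a distribution 𝜇̂_{i_h} over A_{i_h}, the following importance-sampling identity holds: E_{a∼μ}[ (𝜇̂_{i_h}(a_{i_h})/μ_{i_h}(a_{i_h}) − 1) · (μ'_{i_{1:h−1}}(a_{i_{1:h−1}})/μ_{i_{1:h−1}}(a_{i_{1:h−1}})) · A_f(a) ] = E_{a_{i_{1:h−1}}∼μ'_{i_{1:h−1}}, a_{i_h}∼𝜇̂_{i_h}}[ A_{f,i_h}(a_{i_{1:h−1}}, a_{i_h}) ], where A_{f,i_h}(a_{i_{1:h−1}}, a_{i_h}) = E_{a_{−i_{1:h}}∼μ_{−i_{1:h}}}[A_f(a_{i_{1:h}}, a_{−i_{1:h}})] − E_{a_{−i_{1:h−1}}∼μ_{−i_{1:h−1}}}[A_f(a_{i_{1:h−1}},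 a_{−i_{1:h−1}})]. -/

import Mathlib

private lemma aux_sum_one₁ {α : Type*} [Fintype α]
    (X : α → ℝ) (hX : ∑ x, X x = 1) (Z : ℝ) :
    ∑ x, X x * Z = Z := by
  rw [← Finset.sum_mul, hX, one_mul]

private lemma aux_sum_one₂ {α β : Type*} [Fintype α] [Fintype β]
    (X : α → ℝ) (Y : β → ℝ) (hX : ∑ x, X x = 1) (hY : ∑ y, Y y = 1) (Z : ℝ) :
    ∑ x, ∑ y, (X x * Y y) * Z = Z := by
  calc ∑ x, ∑ y, (X x * Y y) * Z = ∑ x, X x * ((∑ y, Y y) * Z) := by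
        refine Finset.sum_congr rfl fun x _ => ?_
        rw [Finset.sum_mul, Finset.mul_sum]
        exact Finset.sum_congr rfl fun y _ => by ring
    _ = Z := by
        rw [hY, one_mul]
        exact aux_sum_one₁ X hX Z

theorem stmt_7 {N : ℕ} {A : Fin N → Type} [∀ i, Fintype (A i)]
    [∀ i, DecidableEq (A i)]
    {h : ℕ}
    -- the ordered subset of agents i₁, …, i_h, i_{h+1}=i_h (last is the updating agent)
    (ι : Fin (h + 1) → Fin N) (hι : Function.Injective ι)
    -- behavior joint policy μ, a fully supported product distribution
    (μ : ∀ i, A i → ℝ)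
    (hμpos : ∀ i a, 0 < μ i a) (hμ1 : ∀ i, ∑ a, μ i a = 1)
    -- other product policy μ' of the first h agents
    (μ' : ∀ j : Fin h, A (ι (Fin.castSucc j)) → ℝ)
    (hμ'nn : ∀ j a, 0 ≤ μ' j a) (hμ'1 : ∀ j, ∑ a, μ' j a = 1)
    -- other policy μ̂ of the last agent
    (μhat : A (ι (Fin.last h)) → ℝ)
    (hμhatnn : ∀ a, 0 ≤ μhat a) (hμhat1 : ∑ a, μhat a = 1)
    -- the advantage function, with zero mean under μ
    (Af : (∀ i, A i) → ℝ)
    (hAf0 : ∑ a : (∀ i, A i), (∏ i, μ i (a i)) * Af a = 0)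
    -- `ovr a c b` overrides the joint action `a` by the actions `c` of the
    -- first h agents and the action `b` of the last agent
    (ovr : (∀ i, A i) → (∀ j : Fin h, A (ι (Fin.castSucc j))) →
      A (ι (Fin.last h)) → ∀ i, A i)
    (hovr1 : ∀ a c b (j : Fin h), ovr a c b (ι (Fin.castSucc j)) = c j)
    (hovr2 : ∀ a c b, ovr a c b (ι (Fin.last h)) = b)
    (hovr3 : ∀ a c b i, (∀ j : Fin (h + 1), ι j ≠ i) → ovr a c b i = a i) :
    -- importance-sampling identity
    ∑ a : (∀ i, A i), (∏ i, μ i (a i)) *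
        ((μhat (a (ι (Fin.last h))) / μ (ι (Fin.last h)) (a (ι (Fin.last h))) - 1) *
          (∏ j : Fin h,
            μ' j (a (ι (Fin.castSucc j))) / μ (ι (Fin.castSucc j)) (a (ι (Fin.castSucc j)))) *
          Af a)
      =
      ∑ c : (∀ j : Fin h, A (ι (Fin.castSucc j))), ∑ b : A (ι (Fin.last h)),
        (∏ j, μ' j (c j)) * μhat b *
          -- the multi-agent advantage A_{f,i_h}(c, b):
          ((∑ a : (∀ i, A i), (∏ i, μ i (a i)) * Af (ovr a c b))
            - ∑ a : (∀ i, A i), (∏ i, μ i (a i)) * Af (ovr a c (a (ι (Fin.last h))))) := by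
  classical
  set S : Finset (Fin N) := Finset.univ.filter (fun i => ¬ ∃ j, ι j = i) with hS
  -- the double-override identity
  have hinv : ∀ (a : ∀ i, A i) c b,
      ovr (ovr a c b) (fun j => a (ι (Fin.castSucc j))) (a (ι (Fin.last h))) = a := by
    intro a c b
    funext i
    by_cases hi : ∃ j, ι j = i
    · obtain ⟨j, rfl⟩ := hi
      cases j using Fin.lastCases with
      | last => rw [hovr2]
      | cast j => rw [hovr1]
    · push_neg at hi
      rw [hovr3 _ _ _ _ hi, hovr3 _ _ _ _ hi]
  have himg : (Finset.univ.filter (fun i => ∃ j, ι j = i)) = Finset.image ι Finset.univ := by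
    ext i
    simp [eq_comm]
  -- splitting the joint distribution
  have hsplit : ∀ f : ∀ i, A i,
      (∏ i, μ i (f i)) =
        ((∏ j : Fin h, μ (ι (Fin.castSucc j)) (f (ι (Fin.castSucc j)))) *
            μ (ι (Fin.last h)) (f (ι (Fin.last h)))) *
          ∏ i ∈ S, μ i (f i) := by
    intro f
    rw [← Finset.prod_filter_mul_prod_filter_not Finset.univ (fun i => ∃ j, ι j = i)
        (fun i => μ i (f i)), himg,
      Finset.prod_image (fun x _ y _ hxy => hι hxy), Fin.prod_univ_castSucc]
  have hrest : ∀ (a : ∀ i, A i) c b,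
      (∏ i ∈ S, μ i (ovr a c b i)) = ∏ i ∈ S, μ i (a i) := by
    intro a c b
    refine Finset.prod_congr rfl fun i hi => ?_
    have hi' := (Finset.mem_filter.mp hi).2
    push_neg at hi'
    rw [hovr3 _ _ _ _ hi']
  have hovrprod : ∀ (a : ∀ i, A i) c b,
      (∏ i, μ i (ovr a c b i)) =
        ((∏ j : Fin h, μ (ι (Fin.castSucc j)) (c j)) * μ (ι (Fin.last h)) b) *
          ∏ i ∈ S, μ i (a i) := by
    intro a c b
    rw [hsplit (ovr a c b), hrest]
    simp only [hovr1, hovr2]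
  -- total masses are 1
  have hsumc : ∑ c : (∀ j : Fin h, A (ι (Fin.castSucc j))),
      ∏ j, μ (ι (Fin.castSucc j)) (c j) = 1 := by
    rw [← Fintype.prod_sum]
    simp [hμ1]
  -- the first reindexed sum
  have key1 : (∑ c : (∀ j : Fin h, A (ι (Fin.castSucc j))), ∑ b : A (ι (Fin.last h)),
        ((∏ j, μ' j (c j)) * μhat b) *
          ∑ a : (∀ i, A i), (∏ i, μ i (a i)) * Af (ovr a c b))
      = ∑ a : (∀ i, A i),
          ((∏ j, μ' j (a (ι (Fin.castSucc j)))) * μhat (a (ι (Fin.last h)))) *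
            ((∏ i ∈ S, μ i (a i)) * Af a) := by
    have e1 : (∑ c : (∀ j : Fin h, A (ι (Fin.castSucc j))), ∑ b : A (ι (Fin.last h)),
          ((∏ j, μ' j (c j)) * μhat b) *
            ∑ a : (∀ i, A i), (∏ i, μ i (a i)) * Af (ovr a c b))
        = ∑ x : (∀ j : Fin h, A (ι (Fin.castSucc j))) × A (ι (Fin.last h)) × (∀ i, A i),
            ((∏ j, μ' j (x.1 j)) * μhat x.2.1) *
              ((∏ i, μ i (x.2.2 i)) * Af (ovr x.2.2 x.1 x.2.1)) := by
      rw [Fintype.sum_prod_type]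
      refine Finset.sum_congr rfl fun c _ => ?_
      rw [Fintype.sum_prod_type]
      refine Finset.sum_congr rfl fun b _ => ?_
      rw [Finset.mul_sum]
    have hgbij : Function.Bijective
        (fun x : (∀ j : Fin h, A (ι (Fin.castSucc j))) × A (ι (Fin.last h)) × (∀ i, A i) =>
          ((fun j => x.2.2 (ι (Fin.castSucc j))), x.2.2 (ι (Fin.last h)), ovr x.2.2 x.1 x.2.1)) := by
      refine Function.Involutive.bijective fun x => ?_
      obtain ⟨c, b, a⟩ := x
      dsimp only
      refine Prod.ext ?_ (Prod.ext ?_ ?_)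
      · funext j; exact hovr1 a c b j
      · exact hovr2 a c b
      · exact hinv a c b
    have e2 := Fintype.sum_bijective _ hgbij
        (fun x : (∀ j : Fin h, A (ι (Fin.castSucc j))) × A (ι (Fin.last h)) × (∀ i, A i) =>
          ((∏ j, μ' j (x.2.2 (ι (Fin.castSucc j)))) * μhat (x.2.2 (ι (Fin.last h)))) *
            ((∏ i, μ i ((ovr x.2.2 x.1 x.2.1) i)) * Af x.2.2))
        (fun x => ((∏ j, μ' j (x.1 j)) * μhat x.2.1) *
            ((∏ i, μ i (x.2.2 i)) * Af (ovr x.2.2 x.1 x.2.1)))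
        (fun x => by
          obtain ⟨c, b, a⟩ := x
          dsimp only
          rw [hinv a c b])
    rw [e1, ← e2, Fintype.sum_prod_type]
    -- now the a-variable sits in position x.2.2; reorganize
    have e3 : (∑ c : (∀ j : Fin h, A (ι (Fin.castSucc j))),
          ∑ y : A (ι (Fin.last h)) × (∀ i, A i),
            ((∏ j, μ' j (y.2 (ι (Fin.castSucc j)))) * μhat (y.2 (ι (Fin.last h)))) *
              ((∏ i, μ i ((ovr y.2 c y.1) i)) * Af y.2))
        = ∑ a : (∀ i, A i),
            ∑ c : (∀ j : Fin h, A (ι (Fin.castSucc j))), ∑ b : A (ι (Fin.last h)),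
              ((∏ j, μ' j (a (ι (Fin.castSucc j)))) * μhat (a (ι (Fin.last h)))) *
                ((∏ i, μ i ((ovr a c b) i)) * Af a) := by
      simp only [Fintype.sum_prod_type]
      exact (Finset.sum_congr rfl fun c _ => Finset.sum_comm).trans Finset.sum_comm
    rw [e3]
    refine Finset.sum_congr rfl fun a _ => ?_
    have : ∀ (c : ∀ j : Fin h, A (ι (Fin.castSucc j))) (b : A (ι (Fin.last h))),
        ((∏ j, μ' j (a (ι (Fin.castSucc j)))) * μhat (a (ι (Fin.last h)))) *
            ((∏ i, μ i ((ovr a c b) i)) * Af a)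
          = ((∏ j : Fin h, μ (ι (Fin.castSucc j)) (c j)) * μ (ι (Fin.last h)) b) *
              (((∏ j, μ' j (a (ι (Fin.castSucc j)))) * μhat (a (ι (Fin.last h)))) *
                ((∏ i ∈ S, μ i (a i)) * Af a)) := by
      intro c b
      rw [hovrprod a c b]
      ring
    simp only [this]
    exact aux_sum_one₂ _ _ hsumc (hμ1 _) _
  -- the second reindexed sum
  have key2 : (∑ c : (∀ j : Fin h, A (ι (Fin.castSucc j))),
        (∏ j, μ' j (c j)) *
          ∑ a : (∀ i, A i), (∏ i, μ i (a i)) * Af (ovr a c (a (ι (Fin.last h)))))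
      = ∑ a : (∀ i, A i),
          (∏ j, μ' j (a (ι (Fin.castSucc j)))) *
            (μ (ι (Fin.last h)) (a (ι (Fin.last h))) * ((∏ i ∈ S, μ i (a i)) * Af a)) := by
    have e1 : (∑ c : (∀ j : Fin h, A (ι (Fin.castSucc j))),
          (∏ j, μ' j (c j)) *
            ∑ a : (∀ i, A i), (∏ i, μ i (a i)) * Af (ovr a c (a (ι (Fin.last h)))))
        = ∑ x : (∀ j : Fin h, A (ι (Fin.castSucc j))) × (∀ i, A i),
            (∏ j, μ' j (x.1 j)) *
              ((∏ i, μ i (x.2 i)) * Af (ovr x.2 x.1 (x.2 (ι (Fin.last h))))) := by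
      rw [Fintype.sum_prod_type]
      refine Finset.sum_congr rfl fun c _ => ?_
      rw [Finset.mul_sum]
    have hgbij : Function.Bijective
        (fun x : (∀ j : Fin h, A (ι (Fin.castSucc j))) × (∀ i, A i) =>
          ((fun j => x.2 (ι (Fin.castSucc j))), ovr x.2 x.1 (x.2 (ι (Fin.last h))))) := by
      refine Function.Involutive.bijective fun x => ?_
      obtain ⟨c, a⟩ := x
      dsimp only
      refine Prod.ext ?_ ?_
      · funext j; exact hovr1 a c _ j
      · rw [hovr2 a c (a (ι (Fin.last h)))]
        exact hinv a c (a (ι (Fin.last h)))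
    have e2 := Fintype.sum_bijective _ hgbij
        (fun x : (∀ j : Fin h, A (ι (Fin.castSucc j))) × (∀ i, A i) =>
          (∏ j, μ' j (x.2 (ι (Fin.castSucc j)))) *
            ((∏ i, μ i ((ovr x.2 x.1 (x.2 (ι (Fin.last h)))) i)) * Af x.2))
        (fun x => (∏ j, μ' j (x.1 j)) *
            ((∏ i, μ i (x.2 i)) * Af (ovr x.2 x.1 (x.2 (ι (Fin.last h))))))
        (fun x => by
          obtain ⟨c, a⟩ := x
          dsimp only
          rw [hovr2 a c (a (ι (Fin.last h))), hinv a c (a (ι (Fin.last h)))])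
    rw [e1, ← e2, Fintype.sum_prod_type, Finset.sum_comm]
    refine Finset.sum_congr rfl fun a _ => ?_
    have : ∀ (c : ∀ j : Fin h, A (ι (Fin.castSucc j))),
        (∏ j, μ' j (a (ι (Fin.castSucc j)))) *
            ((∏ i, μ i ((ovr a c (a (ι (Fin.last h)))) i)) * Af a)
          = (∏ j : Fin h, μ (ι (Fin.castSucc j)) (c j)) *
              ((∏ j, μ' j (a (ι (Fin.castSucc j)))) *
                (μ (ι (Fin.last h)) (a (ι (Fin.last h))) * ((∏ i ∈ S, μ i (a i)) * Af a))) := by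
      intro c
      rw [hovrprod a c (a (ι (Fin.last h)))]
      ring
    simp only [this]
    exact aux_sum_one₁ _ hsumc _
  -- pointwise identity for the left-hand side
  have hpoint : ∀ a : ∀ i, A i,
      (∏ i, μ i (a i)) *
          ((μhat (a (ι (Fin.last h))) / μ (ι (Fin.last h)) (a (ι (Fin.last h))) - 1) *
            (∏ j : Fin h,
              μ' j (a (ι (Fin.castSucc j))) / μ (ι (Fin.castSucc j)) (a (ι (Fin.castSucc j)))) *
            Af a)
        = ((∏ j, μ' j (a (ι (Fin.castSucc j)))) * μhat (a (ι (Fin.last h)))) *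
              ((∏ i ∈ S, μ i (a i)) * Af a)
          - (∏ j, μ' j (a (ι (Fin.castSucc j)))) *
              (μ (ι (Fin.last h)) (a (ι (Fin.last h))) * ((∏ i ∈ S, μ i (a i)) * Af a)) := by
    intro a
    have hPc : (∏ j : Fin h, μ (ι (Fin.castSucc j)) (a (ι (Fin.castSucc j)))) *
        (∏ j : Fin h,
          μ' j (a (ι (Fin.castSucc j))) / μ (ι (Fin.castSucc j)) (a (ι (Fin.castSucc j))))
        = ∏ j, μ' j (a (ι (Fin.castSucc j))) := by
      rw [← Finset.prod_mul_distrib]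
      refine Finset.prod_congr rfl fun j _ => ?_
      rw [mul_comm, div_mul_cancel₀ _ (hμpos _ _).ne']
    have hPL : μ (ι (Fin.last h)) (a (ι (Fin.last h))) *
        (μhat (a (ι (Fin.last h))) / μ (ι (Fin.last h)) (a (ι (Fin.last h))))
        = μhat (a (ι (Fin.last h))) := by
      rw [mul_comm, div_mul_cancel₀ _ (hμpos _ _).ne']
    rw [hsplit a]
    calc ((∏ j : Fin h, μ (ι (Fin.castSucc j)) (a (ι (Fin.castSucc j)))) *
            μ (ι (Fin.last h)) (a (ι (Fin.last h))) * ∏ i ∈ S, μ i (a i)) *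
          ((μhat (a (ι (Fin.last h))) / μ (ι (Fin.last h)) (a (ι (Fin.last h))) - 1) *
            (∏ j : Fin h,
              μ' j (a (ι (Fin.castSucc j))) / μ (ι (Fin.castSucc j)) (a (ι (Fin.castSucc j)))) *
            Af a)
        = ((∏ j : Fin h, μ (ι (Fin.castSucc j)) (a (ι (Fin.castSucc j)))) *
              (∏ j : Fin h,
                μ' j (a (ι (Fin.castSucc j))) / μ (ι (Fin.castSucc j)) (a (ι (Fin.castSucc j))))) *
            ((μ (ι (Fin.last h)) (a (ι (Fin.last h))) *
                (μhat (a (ι (Fin.last h))) / μ (ι (Fin.last h)) (a (ι (Fin.last h))))) *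
              ((∏ i ∈ S, μ i (a i)) * Af a))
          - ((∏ j : Fin h, μ (ι (Fin.castSucc j)) (a (ι (Fin.castSucc j)))) *
              (∏ j : Fin h,
                μ' j (a (ι (Fin.castSucc j))) / μ (ι (Fin.castSucc j)) (a (ι (Fin.castSucc j))))) *
            (μ (ι (Fin.last h)) (a (ι (Fin.last h))) * ((∏ i ∈ S, μ i (a i)) * Af a)) := by
          ring
      _ = _ := by rw [hPc, hPL]; ring
  -- assemble
  have hRHS : (∑ c : (∀ j : Fin h, A (ι (Fin.castSucc j))), ∑ b : A (ι (Fin.last h)),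
        (∏ j, μ' j (c j)) * μhat b *
          ((∑ a : (∀ i, A i), (∏ i, μ i (a i)) * Af (ovr a c b))
            - ∑ a : (∀ i, A i), (∏ i, μ i (a i)) * Af (ovr a c (a (ι (Fin.last h))))))
      = (∑ c : (∀ j : Fin h, A (ι (Fin.castSucc j))), ∑ b : A (ι (Fin.last h)),
          ((∏ j, μ' j (c j)) * μhat b) *
            ∑ a : (∀ i, A i), (∏ i, μ i (a i)) * Af (ovr a c b))
        - ∑ c : (∀ j : Fin h, A (ι (Fin.castSucc j))),
            (∏ j, μ' j (c j)) *
              ∑ a : (∀ i, A i), (∏ i, μ i (a i)) * Af (ovr a c (a (ι (Fin.last h)))) := by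
    refine Eq.trans (Finset.sum_congr rfl fun c _ => ?_) (Finset.sum_sub_distrib _ _)
    have hb : ∀ b : A (ι (Fin.last h)),
        (∏ j, μ' j (c j)) * μhat b *
            ((∑ a : (∀ i, A i), (∏ i, μ i (a i)) * Af (ovr a c b))
              - ∑ a : (∀ i, A i), (∏ i, μ i (a i)) * Af (ovr a c (a (ι (Fin.last h)))))
          = ((∏ j, μ' j (c j)) * μhat b) *
              (∑ a : (∀ i, A i), (∏ i, μ i (a i)) * Af (ovr a c b))
            - μhat b * ((∏ j, μ' j (c j)) *
              ∑ a : (∀ i, A i), (∏ i, μ i (a i)) * Af (ovr a c (a (ι (Fin.last h))))) := by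
      intro b; ring
    simp only [hb]
    rw [Finset.sum_sub_distrib]
    congr 1
    exact aux_sum_one₁ _ hμhat1 _
  rw [hRHS, key1, key2]
  exact Eq.trans (Finset.sum_congr rfl fun a _ => hpoint a) (Finset.sum_sub_distrib _ _)
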